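/- Let C be a skeletal Levi category and suppose that x = a₁a₂⋯a_n = b₁b₂⋯b_n where all the a_i and b_j are atoms. Then a_i is parallel to b_i for each i = 1, …, n, i.e. d(a_i) = d(b_i) and r(a_i) = r(b_i). -/

import Mathlib

open CategoryTheory

universe v u

variable {C : Type u} [Category.{v} C]

/-- The set of all arrows of a category, as a sigma type. -/
abbrev CatArr (C : Type u) [Category.{v} C] : Type (max u v) := Σ (X : C) (Y : C), X ⟶ Y

/-- An arrow is an atom if it is not invertible and in any factorization one factor
is invertible. -/
def IsAtomArrow {X Y : C} (a : X ⟶ Y) : Prop :=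
  ¬ IsIso a ∧ ∀ ⦃Z : C⦄ (b : X ⟶ Z) (c : Z ⟶ Y), a = b ≫ c → IsIso b ∨ IsIso c

/-- The principal right ideal `aC` generated by an arrow `a`. -/
def rIdeal {X Y : C} (a : X ⟶ Y) : Set (CatArr C) :=
  { p | ∃ (Z : C) (b : Y ⟶ Z), p = ⟨X, Z, a ≫ b⟩ }

/-- The principal left ideal `Ca` generated by an arrow `a`. -/
def lIdeal {X Y : C} (a : X ⟶ Y) : Set (CatArr C) :=
  { p | ∃ (Z : C) (b : Z ⟶ X), p = ⟨Z, Y, b ≫ a⟩ }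

/-- The principal two-sided ideal `CaC` generated by an arrow `a`. -/
def twoIdeal {X Y : C} (a : X ⟶ Y) : Set (CatArr C) :=
  { p | ∃ (W Z : C) (b : W ⟶ X) (c : Y ⟶ Z), p = ⟨W, Z, b ≫ a ≫ c⟩ }

/-- A category is left cancellative if `ax = ay` implies `x = y`. -/
def LeftCancellativeCat (C : Type u) [Category.{v} C] : Prop :=
  ∀ ⦃X Y Z : C⦄ (a : X ⟶ Y) (x y : Y ⟶ Z), a ≫ x = a ≫ y → x = y

/-- A category is right cancellative if `xa = ya` implies `x = y`. -/
def RightCancellativeCat (C : Type u) [Category.{v} C] : Prop :=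
  ∀ ⦃X Y Z : C⦄ (x y : X ⟶ Y) (a : Y ⟶ Z), x ≫ a = y ≫ a → x = y

/-- A category is right rigid if principal right ideals that intersect are comparable. -/
def RightRigid (C : Type u) [Category.{v} C] : Prop :=
  ∀ ⦃X Y X' Y' : C⦄ (a : X ⟶ Y) (b : X' ⟶ Y'),
    (rIdeal a ∩ rIdeal b).Nonempty → rIdeal a ⊆ rIdeal b ∨ rIdeal b ⊆ rIdeal a

/-- A category is equidivisible if every equality `ab = cd` admits an intermediate arrow. -/
def Equidivisible (C : Type u) [Category.{v} C] : Prop :=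
  ∀ ⦃W X Y Z : C⦄ (a : W ⟶ X) (b : X ⟶ Z) (c : W ⟶ Y) (d : Y ⟶ Z),
    a ≫ b = c ≫ d →
      (∃ u : Y ⟶ X, a = c ≫ u ∧ d = u ≫ b) ∨ (∃ v : X ⟶ Y, c = a ≫ v ∧ b = v ≫ d)

/-- A length functor on a category: additive on composition, zero exactly on invertible
arrows, one exactly on atoms. -/
structure LengthFunctor (C : Type u) [Category.{v} C] where
  len : ∀ ⦃X Y : C⦄, (X ⟶ Y) → ℕ
  len_comp : ∀ ⦃X Y Z : C⦄ (f : X ⟶ Y) (g : Y ⟶ Z), len (f ≫ g) = len f + len g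
  len_eq_zero_iff : ∀ ⦃X Y : C⦄ (f : X ⟶ Y), len f = 0 ↔ IsIso f
  len_eq_one_iff : ∀ ⦃X Y : C⦄ (f : X ⟶ Y), len f = 1 ↔ IsAtomArrow f

/-- A subset of the arrows is a principal right ideal if it has the form `xC`. -/
def IsPrincipalRightIdeal (S : Set (CatArr C)) : Prop :=
  ∃ (U V : C) (x : U ⟶ V), S = rIdeal x

/-- The interval `[aC, bC]` of principal right ideals between `aC` and `bC`. -/
def rInterval {X Y Z W : C} (a : X ⟶ Y) (b : Z ⟶ W) : Set (Set (CatArr C)) :=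
  { S | IsPrincipalRightIdeal S ∧ rIdeal a ⊆ S ∧ S ⊆ rIdeal b }

/-- A left Rees category: left cancellative, right rigid, and each principal right
ideal is properly contained in only finitely many principal right ideals. -/
def IsLeftReesCategory (C : Type u) [Category.{v} C] : Prop :=
  LeftCancellativeCat C ∧ RightRigid C ∧
    ∀ ⦃X Y : C⦄ (a : X ⟶ Y),
      { S : Set (CatArr C) | IsPrincipalRightIdeal S ∧ rIdeal a ⊂ S }.Finite

/-- A category is skeletal if every invertible arrow has equal domain and codomain. -/
def SkeletalCat (C : Type u) [Category.{v} C] : Prop :=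
  ∀ ⦃X Y : C⦄ (g : X ⟶ Y), IsIso g → X = Y

/-- The composite `f 0 ≫ f 1 ≫ ⋯ ≫ f (n-1)` of a composable chain of arrows. -/
def chainComp : ∀ {n : ℕ} {X : Fin (n + 1) → C},
    (∀ i : Fin n, X i.castSucc ⟶ X i.succ) →
      (X ⟨0, Nat.succ_pos n⟩ ⟶ X ⟨n, Nat.lt_succ_self n⟩)
  | 0, _, _ => 𝟙 _
  | n + 1, X, f =>
      f ⟨0, Nat.succ_pos n⟩ ≫ chainComp (X := fun i => X i.succ) (fun i => f i.succ)

lemma aux_parallel (L : LengthFunctor C) (hE : Equidivisible C) (hsk : SkeletalCat C) :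
    ∀ (n : ℕ) (X Y : Fin (n + 1) → C)
      (a : ∀ i : Fin n, X i.castSucc ⟶ X i.succ)
      (b : ∀ i : Fin n, Y i.castSucc ⟶ Y i.succ),
      (∀ i, L.len (a i) = 1) → (∀ i, L.len (b i) = 1) →
      ∀ (h1 : X ⟨n, Nat.lt_succ_self n⟩ = Y ⟨n, Nat.lt_succ_self n⟩)
        (g : X ⟨0, Nat.succ_pos n⟩ ⟶ Y ⟨0, Nat.succ_pos n⟩), IsIso g →
        chainComp a = g ≫ chainComp b ≫ eqToHom h1.symm →
        ∀ i, X i = Y i := by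
  intro n
  induction n with
  | zero =>
    intro X Y a b ha hb h1 g hg hx i
    have hi : i = ⟨0, Nat.succ_pos 0⟩ := Fin.ext (by omega)
    rw [hi]
    exact hsk g hg
  | succ n ih =>
    intro X Y a b ha hb h1 g hg hx
    have hx' : a ⟨0, Nat.succ_pos n⟩ ≫ chainComp (X := fun i => X i.succ) (fun i => a i.succ)
        = (g ≫ b ⟨0, Nat.succ_pos n⟩) ≫
          (chainComp (X := fun i => Y i.succ) (fun i => b i.succ) ≫ eqToHom h1.symm) := by
      refine Eq.trans hx ?_
      rw [Category.assoc]
      congr 1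
      rw [← Category.assoc]
      rfl
    have hg0 : L.len g = 0 := (L.len_eq_zero_iff g).mpr hg
    rcases hE _ _ _ _ hx' with ⟨u, hu1, hu2⟩ | ⟨v, hv1, hv2⟩
    · have hlu : L.len u = 0 := by
        have := congrArg (fun f => L.len f) hu1
        simp only [L.len_comp, hg0, ha, hb] at this
        omega
      have hu : IsIso u := (L.len_eq_zero_iff u).mp hlu
      have heq : chainComp (X := fun i => X i.succ) (fun i => a i.succ)
          = inv u ≫ chainComp (X := fun i => Y i.succ) (fun i => b i.succ) ≫ eqToHom h1.symm := by
        rw [hu2, IsIso.inv_hom_id_assoc]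
      have key := ih (fun i => X i.succ) (fun i => Y i.succ) (fun i => a i.succ)
        (fun i => b i.succ) (fun i => ha i.succ) (fun i => hb i.succ) h1 (inv u)
        inferInstance heq
      intro i
      refine Fin.cases ?_ (fun j => key j) i
      exact hsk g hg
    · have hlv : L.len v = 0 := by
        have := congrArg (fun f => L.len f) hv1
        simp only [L.len_comp, hg0, ha, hb] at this
        omega
      have hv : IsIso v := (L.len_eq_zero_iff v).mp hlv
      have key := ih (fun i => X i.succ) (fun i => Y i.succ) (fun i => a i.succ)
        (fun i => b i.succ) (fun i => ha i.succ) (fun i => hb i.succ) h1 v hv hv2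
      intro i
      refine Fin.cases ?_ (fun j => key j) i
      exact hsk g hg

/-- In a skeletal Levi category, if `x = a₁⋯a_n = b₁⋯b_n` with all
`a_i, b_j` atoms, then `a_i` is parallel to `b_i` for each `i`:
`d(a_i) = d(b_i)` and `r(a_i) = r(b_i)`. -/
theorem parallel_of_two_atom_factorizations_of_skeletal
    (L : LengthFunctor C) (hE : Equidivisible C)
    (hni : ∃ (X Y : C) (a : X ⟶ Y), ¬ IsIso a) (hsk : SkeletalCat C)
    {n : ℕ} {X : Fin (n + 1) → C} {Y : Fin (n + 1) → C}
    (a : ∀ i : Fin n, X i.castSucc ⟶ X i.succ)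
    (b : ∀ i : Fin n, Y i.castSucc ⟶ Y i.succ)
    (ha : ∀ i, IsAtomArrow (a i)) (hb : ∀ i, IsAtomArrow (b i))
    (h0 : X ⟨0, Nat.succ_pos n⟩ = Y ⟨0, Nat.succ_pos n⟩)
    (h1 : X ⟨n, Nat.lt_succ_self n⟩ = Y ⟨n, Nat.lt_succ_self n⟩)
    (hx : chainComp a = eqToHom h0 ≫ chainComp b ≫ eqToHom h1.symm) :
    ∀ i : Fin n, X i.castSucc = Y i.castSucc ∧ X i.succ = Y i.succ := by
  have key := aux_parallel L hE hsk n X Y a b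
    (fun i => (L.len_eq_one_iff (a i)).mpr (ha i))
    (fun i => (L.len_eq_one_iff (b i)).mpr (hb i)) h1 (eqToHom h0) inferInstance hx
  exact fun i => ⟨key i.castSucc, key i.succ⟩
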